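/- For every positive integer n, the polynomial H_n(x) = \sum_{j=0}^{\lfloor n/2 \rfloor} \binom{n-j}{j} x^j has only real zeros, and all its zeros are negative and simple. -/

import Mathlib

open Polynomial Finset

private noncomputable def gAux (n : ℕ) (x : ℝ) : ℝ :=
  ∑ j ∈ Finset.range (n + 1), ((n - j).choose j : ℝ) * x ^ j

private lemma gAux_rec (n : ℕ) (x : ℝ) :
    gAux (n + 2) x = gAux (n + 1) x + x * gAux n x := by
  have hL : gAux (n + 2) x
      = (∑ i ∈ Finset.range (n + 1),
          (((n - i).choose i : ℝ) * x ^ (i + 1) + ((n - i).choose (i + 1) : ℝ) * x ^ (i + 1)))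
        + 1 := by
    rw [gAux, Finset.sum_range_succ', Finset.sum_range_succ]
    have h0 : (((n + 2 - (n + 1 + 1)).choose (n + 1 + 1) : ℕ) : ℝ) * x ^ (n + 1 + 1) = 0 := by
      rw [show n + 2 - (n + 1 + 1) = 0 from by omega,
        Nat.choose_eq_zero_of_lt (by omega)]
      simp
    have hcong : ∀ i ∈ Finset.range (n + 1),
        (((n + 2 - (i + 1)).choose (i + 1) : ℕ) : ℝ) * x ^ (i + 1)
          = ((n - i).choose i : ℝ) * x ^ (i + 1) + ((n - i).choose (i + 1) : ℝ) * x ^ (i + 1) := by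
      intro i hi
      rw [Finset.mem_range] at hi
      rw [show n + 2 - (i + 1) = (n - i) + 1 from by omega, Nat.choose_succ_succ]
      push_cast
      ring
    rw [Finset.sum_congr rfl hcong, h0]
    simp
  have hR1 : gAux (n + 1) x
      = (∑ i ∈ Finset.range (n + 1), ((n - i).choose (i + 1) : ℝ) * x ^ (i + 1)) + 1 := by
    rw [gAux, Finset.sum_range_succ']
    have hcong : ∀ i ∈ Finset.range (n + 1),
        (((n + 1 - (i + 1)).choose (i + 1) : ℕ) : ℝ) * x ^ (i + 1)
          = ((n - i).choose (i + 1) : ℝ) * x ^ (i + 1) := by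
      intro i _
      rw [show n + 1 - (i + 1) = n - i from by omega]
    rw [Finset.sum_congr rfl hcong]
    simp
  have hR2 : x * gAux n x
      = ∑ i ∈ Finset.range (n + 1), ((n - i).choose i : ℝ) * x ^ (i + 1) := by
    rw [gAux, Finset.mul_sum]
    refine Finset.sum_congr rfl fun i _ => ?_
    ring
  rw [hL, hR1, hR2, Finset.sum_add_distrib]
  ring

private lemma gAux_trig (θ : ℝ) (hc : Real.cos θ ≠ 0) (n : ℕ) :
    gAux n (-(1 / (4 * Real.cos θ ^ 2))) * (2 * Real.cos θ) ^ n * Real.sin θ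
      = Real.sin (((n : ℝ) + 1) * θ) := by
  set x : ℝ := -(1 / (4 * Real.cos θ ^ 2)) with hx
  induction n using Nat.strong_induction_on with
  | _ n ih =>
    match n with
    | 0 => simp [gAux]
    | 1 =>
      have h1 : gAux 1 x = 1 := by simp [gAux, Finset.sum_range_succ]
      rw [h1, one_mul]
      rw [show (2 * Real.cos θ) ^ 1 * Real.sin θ = 2 * Real.sin θ * Real.cos θ from by ring,
        ← Real.sin_two_mul]
      norm_num
    | (m + 2) =>
      have e1 := ih m (by omega)
      have e2 := ih (m + 1) (by omega)
      rw [gAux_rec]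
      have hxc : x * (2 * Real.cos θ) ^ 2 = -1 := by
        rw [hx]
        field_simp
        ring
      have expand : (gAux (m + 1) x + x * gAux m x) * (2 * Real.cos θ) ^ (m + 2) * Real.sin θ
          = 2 * Real.cos θ * (gAux (m + 1) x * (2 * Real.cos θ) ^ (m + 1) * Real.sin θ)
            + (x * (2 * Real.cos θ) ^ 2) * (gAux m x * (2 * Real.cos θ) ^ m * Real.sin θ) := by
        ring
      rw [expand, hxc, e1, e2]
      have tri := Real.sin_add (((m : ℝ) + 2) * θ) θ
      have tri2 := Real.sin_sub (((m : ℝ) + 2) * θ) θ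
      push_cast
      ring_nf
      ring_nf at tri tri2
      linarith [tri, tri2]

theorem stmt_0 (n : ℕ) (hn : 0 < n) :
    let H : Polynomial ℝ := ∑ j ∈ Finset.range (n / 2 + 1), C (((n - j).choose j : ℝ)) * X ^ j
    (∀ z : ℂ, aeval z H = 0 → z.im = 0) ∧
    (∀ x : ℝ, H.IsRoot x → x < 0) ∧
    (∀ x : ℝ, H.rootMultiplicity x ≤ 1) := by
  intro H
  have heval : ∀ x : ℝ, H.eval x = gAux n x := by
    intro x
    have : H.eval x = ∑ j ∈ Finset.range (n / 2 + 1), ((n - j).choose j : ℝ) * x ^ j := by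
      simp [H, Polynomial.eval_finset_sum]
    rw [this, gAux]
    apply Finset.sum_subset
    · intro j hj
      rw [Finset.mem_range] at *
      omega
    · intro j hj1 hj2
      rw [Finset.mem_range] at *
      have : n - j < j := by omega
      rw [Nat.choose_eq_zero_of_lt this]
      simp
  have hdegle : H.natDegree ≤ n / 2 := by
    apply (Polynomial.natDegree_sum_le _ _).trans
    rw [Finset.fold_max_le]
    refine ⟨Nat.zero_le _, fun j hj => ?_⟩
    rw [Finset.mem_range] at hj
    exact (Polynomial.natDegree_C_mul_X_pow_le _ _).trans (by omega)
  have hcoeff : H.coeff (n / 2) = ((n - n / 2).choose (n / 2) : ℝ) := by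
    simp only [H, Polynomial.finset_sum_coeff, Polynomial.coeff_C_mul, Polynomial.coeff_X_pow]
    rw [Finset.sum_eq_single (n / 2)]
    · simp
    · intro j _ hj; simp [hj.symm]
    · intro h; exact absurd (Finset.self_mem_range_succ _) h
  have hlc : H.coeff (n / 2) ≠ 0 := by
    rw [hcoeff]
    have : 0 < (n - n / 2).choose (n / 2) := Nat.choose_pos (by omega)
    positivity
  have hHne : H ≠ 0 := fun h => hlc (by simp [h])
  have hdeg : H.natDegree = n / 2 :=
    le_antisymm hdegle (Polynomial.le_natDegree_of_ne_zero hlc)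
  set r : ℕ → ℝ := fun k => -(1 / (4 * Real.cos (((k : ℝ) + 1) * Real.pi / ((n : ℝ) + 1)) ^ 2))
    with hr
  have hθ : ∀ k < n / 2, 0 < ((k : ℝ) + 1) * Real.pi / ((n : ℝ) + 1) ∧
      ((k : ℝ) + 1) * Real.pi / ((n : ℝ) + 1) < Real.pi / 2 := by
    intro k hk
    have hπ := Real.pi_pos
    constructor
    · positivity
    · rw [div_lt_div_iff₀ (by positivity) (by norm_num)]
      have h2 : 2 * ((k : ℝ) + 1) < (n : ℝ) + 1 := by
        have h3 : 2 * (k + 1) ≤ n := by omega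
        have h4 : ((2 * (k + 1) : ℕ) : ℝ) ≤ (n : ℝ) := Nat.cast_le.mpr h3
        push_cast at h4
        linarith
      nlinarith
  have hcos : ∀ k < n / 2, 0 < Real.cos (((k : ℝ) + 1) * Real.pi / ((n : ℝ) + 1)) := by
    intro k hk
    obtain ⟨h1, h2⟩ := hθ k hk
    exact Real.cos_pos_of_mem_Ioo ⟨by linarith [Real.pi_pos], h2⟩
  have hroot : ∀ k < n / 2, H.eval (r k) = 0 := by
    intro k hk
    set θ := ((k : ℝ) + 1) * Real.pi / ((n : ℝ) + 1) with hθdef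
    have hc := hcos k hk
    have hs : 0 < Real.sin θ := Real.sin_pos_of_pos_of_lt_pi (hθ k hk).1
      (by linarith [(hθ k hk).2, Real.pi_pos])
    have htrig := gAux_trig θ (ne_of_gt hc) n
    have hsin0 : Real.sin (((n : ℝ) + 1) * θ) = 0 := by
      have hne : (n : ℝ) + 1 ≠ 0 := by positivity
      have harg : ((n : ℝ) + 1) * θ = ((k + 1 : ℕ) : ℝ) * Real.pi := by
        rw [hθdef]; push_cast; field_simp
      rw [harg, Real.sin_nat_mul_pi]
    rw [hsin0] at htrig
    have h2c : (2 * Real.cos θ) ^ n ≠ 0 := by positivity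
    rcases mul_eq_zero.mp htrig with h | h
    · rcases mul_eq_zero.mp h with h | h
      · rw [heval, hr]; exact h
      · exact absurd h h2c
    · linarith
  have hinj : Set.InjOn r (Finset.range (n / 2) : Set ℕ) := by
    intro a ha b hb hab
    simp only [Finset.coe_range, Set.mem_Iio] at ha hb
    have hca := hcos a ha
    have hcb := hcos b hb
    set A := Real.cos (((a : ℝ) + 1) * Real.pi / ((n : ℝ) + 1)) with hA
    set B := Real.cos (((b : ℝ) + 1) * Real.pi / ((n : ℝ) + 1)) with hB
    have hsq : A ^ 2 = B ^ 2 := by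
      have h1 : -(1 / (4 * A ^ 2)) = -(1 / (4 * B ^ 2)) := hab
      have h2 : 1 / (4 * A ^ 2) = 1 / (4 * B ^ 2) := neg_inj.mp h1
      have hA4 : (4 : ℝ) * A ^ 2 ≠ 0 := by positivity
      have hB4 : (4 : ℝ) * B ^ 2 ≠ 0 := by positivity
      rw [div_eq_div_iff hA4 hB4] at h2
      linarith
    have hcc : A = B := by
      have h3 : (A - B) * (A + B) = 0 := by nlinarith
      rcases mul_eq_zero.mp h3 with h | h
      · linarith
      · nlinarith
    have hπ := Real.pi_pos
    have hθeq := Real.injOn_cos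
      ⟨le_of_lt (hθ a ha).1, by linarith [(hθ a ha).2]⟩
      ⟨le_of_lt (hθ b hb).1, by linarith [(hθ b hb).2]⟩ hcc
    have hn1 : ((n : ℝ) + 1) ≠ 0 := by positivity
    rw [div_eq_div_iff hn1 hn1] at hθeq
    have h1 : ((a : ℝ) + 1) * Real.pi = ((b : ℝ) + 1) * Real.pi :=
      mul_right_cancel₀ hn1 hθeq
    have h2 : ((a : ℝ) + 1) = ((b : ℝ) + 1) := mul_right_cancel₀ (ne_of_gt hπ) h1
    have : (a : ℝ) = (b : ℝ) := by linarith
    exact_mod_cast this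
  classical
  set S : Finset ℝ := (Finset.range (n / 2)).image r with hS
  have hScard : S.card = n / 2 := by
    rw [hS, Finset.card_image_of_injOn hinj, Finset.card_range]
  have hSsub : S ⊆ H.roots.toFinset := by
    intro x hx
    rw [hS, Finset.mem_image] at hx
    obtain ⟨k, hk, rfl⟩ := hx
    rw [Finset.mem_range] at hk
    rw [Multiset.mem_toFinset, Polynomial.mem_roots hHne]
    exact hroot k hk
  have hrootscard : Multiset.card H.roots ≤ n / 2 := hdeg ▸ Polynomial.card_roots' H
  have hchain : n / 2 ≤ H.roots.toFinset.card :=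
    hScard ▸ Finset.card_le_card hSsub
  have htf_card : H.roots.toFinset.card = Multiset.card H.roots :=
    le_antisymm (Multiset.toFinset_card_le _) (le_trans hrootscard hchain)
  have hnodup : H.roots.Nodup := Multiset.toFinset_card_eq_card_iff_nodup.mp htf_card
  have hSeq : S = H.roots.toFinset :=
    Finset.eq_of_subset_of_card_le hSsub (by omega)
  have hrneg : ∀ k < n / 2, r k < 0 := by
    intro k hk
    have hck := hcos k hk
    have : 0 < 1 / (4 * Real.cos (((k : ℝ) + 1) * Real.pi / ((n : ℝ) + 1)) ^ 2) := by
      positivity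
    rw [hr]
    simp only
    linarith
  refine ⟨?_, ?_, ?_⟩
  · intro z hz
    set Hc : Polynomial ℂ := H.map (algebraMap ℝ ℂ) with hHc
    have hHcne : Hc ≠ 0 := by
      rw [hHc, Ne, Polynomial.map_eq_zero_iff (algebraMap ℝ ℂ).injective]
      exact hHne
    have hzroot : z ∈ Hc.roots := by
      rw [Polynomial.mem_roots hHcne, Polynomial.IsRoot, hHc, Polynomial.eval_map,
        ← Polynomial.aeval_def]
      exact hz
    set S' : Finset ℂ := S.image (fun x : ℝ => (x : ℂ)) with hS'
    have hS'card : S'.card = n / 2 := by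
      rw [hS', Finset.card_image_of_injective _ Complex.ofReal_injective, hScard]
    have hS'sub : S' ⊆ Hc.roots.toFinset := by
      intro w hw
      rw [hS', Finset.mem_image] at hw
      obtain ⟨x, hx, rfl⟩ := hw
      have hx' : x ∈ H.roots.toFinset := hSsub hx
      rw [Multiset.mem_toFinset, Polynomial.mem_roots hHne] at hx'
      rw [Multiset.mem_toFinset, Polynomial.mem_roots hHcne, Polynomial.IsRoot, hHc,
        Polynomial.eval_map, show ((x : ℂ)) = algebraMap ℝ ℂ x from rfl,
        Polynomial.eval₂_at_apply, show H.eval x = 0 from hx']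
      simp
    have hHcdeg : Multiset.card Hc.roots ≤ n / 2 := by
      rw [hHc]
      calc Multiset.card (H.map (algebraMap ℝ ℂ)).roots
          ≤ (H.map (algebraMap ℝ ℂ)).natDegree := Polynomial.card_roots' _
        _ = H.natDegree := Polynomial.natDegree_map _
        _ = n / 2 := hdeg
    have hzS' : z ∈ S' := by
      by_contra hzn
      have hsub : insert z S' ⊆ Hc.roots.toFinset := by
        intro w hw
        rcases Finset.mem_insert.mp hw with rfl | hw
        · rw [Multiset.mem_toFinset]; exact hzroot
        · exact hS'sub hw
      have h1 : (insert z S').card = n / 2 + 1 := by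
        rw [Finset.card_insert_of_notMem hzn, hS'card]
      have h2 := Finset.card_le_card hsub
      have h3 := Multiset.toFinset_card_le Hc.roots
      omega
    rw [hS', Finset.mem_image] at hzS'
    obtain ⟨x, _, rfl⟩ := hzS'
    exact Complex.ofReal_im x
  · intro x hx
    have hmem : x ∈ H.roots.toFinset := by
      rw [Multiset.mem_toFinset, Polynomial.mem_roots hHne]
      exact hx
    rw [← hSeq, hS, Finset.mem_image] at hmem
    obtain ⟨k, hk, rfl⟩ := hmem
    rw [Finset.mem_range] at hk
    exact hrneg k hk
  · intro x
    rw [← Polynomial.count_roots]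
    exact Multiset.nodup_iff_count_le_one.mp hnodup x
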